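/- Continuous inf-sup inequality: there exists a constant k_c > 0 such that for every ψ = (v, w, V, W) ∈ M there exists Σ ∈ V with ‖Σ‖_V ≤ 1 and b(Σ, ψ) ≥ k_c · ‖ψ‖_M. -/

import Mathlib

open MeasureTheory Matrix

noncomputable section

abbrev E3 : Type := EuclideanSpace ℝ (Fin 3)

def dot3 (a b : E3) : ℝ := ∑ j, a j * b j

def cross3 (a b : E3) : E3 :=
  WithLp.toLp 2 ![a 1 * b 2 - a 2 * b 1, a 2 * b 0 - a 0 * b 2, a 0 * b 1 - a 1 * b 0]

def SqIntOn (f : ℝ → E3) (l : ℝ) : Prop :=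
  IntegrableOn f (Set.Ioc 0 l) ∧ IntegrableOn (fun s => ‖f s‖ ^ 2) (Set.Ioc 0 l)

def H1On (l : ℝ) (v dv : ℝ → E3) : Prop :=
  ContinuousOn v (Set.Icc 0 l) ∧ SqIntOn dv l ∧
    ∀ x ∈ Set.Icc 0 l, v x = v 0 + ∫ s in Set.Ioc 0 x, dv s

def EdgeConn {nE nV : ℕ} (tail head : Fin nE → Fin nV) : Prop :=
  ∀ a b : Fin nV, Relation.ReflTransGen
    (fun x y => ∃ i, (tail i = x ∧ head i = y) ∨ (tail i = y ∧ head i = x)) a b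

variable {nE nV : ℕ}

def bform (tail head : Fin nE → Fin nV) (l : Fin nE → ℝ) (t : Fin nE → ℝ → E3)
    (q p : Fin nE → ℝ → E3) (Pp Pm Qp Qm : Fin nE → E3) (al be : E3)
    (v dv w dw : Fin nE → ℝ → E3) (V W : Fin nV → E3) : ℝ :=
  (∑ i, ∫ s in Set.Ioc 0 (l i),
      (-(dot3 (p i s) (dv i s + cross3 (t i s) (w i s))) - dot3 (q i s) (dw i s)))
  + (∑ i, (dot3 (Pp i) (v i (l i)) - dot3 (Pm i) (v i 0)))
  + (∑ i, (dot3 (Qp i) (w i (l i)) - dot3 (Qm i) (w i 0)))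
  - (∑ j, dot3 ((∑ i ∈ Finset.univ.filter fun i => head i = j, Pp i)
        - ∑ i ∈ Finset.univ.filter fun i => tail i = j, Pm i) (V j))
  - (∑ j, dot3 ((∑ i ∈ Finset.univ.filter fun i => head i = j, Qp i)
        - ∑ i ∈ Finset.univ.filter fun i => tail i = j, Qm i) (W j))
  + dot3 al (∑ i, ∫ s in Set.Ioc 0 (l i), v i s)
  + dot3 be (∑ i, ∫ s in Set.Ioc 0 (l i), w i s)

def normVsq (l : Fin nE → ℝ) (q p : Fin nE → ℝ → E3) (Pp Pm Qp Qm : Fin nE → E3)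
    (al be : E3) : ℝ :=
  (∑ i, ∫ s in Set.Ioc 0 (l i), (‖q i s‖ ^ 2 + ‖p i s‖ ^ 2))
  + (∑ i, ‖Pp i‖ ^ 2) + (∑ i, ‖Pm i‖ ^ 2) + (∑ i, ‖Qp i‖ ^ 2) + (∑ i, ‖Qm i‖ ^ 2)
  + ‖al‖ ^ 2 + ‖be‖ ^ 2

def normMsq (l : Fin nE → ℝ) (v dv w dw : Fin nE → ℝ → E3) (V W : Fin nV → E3) : ℝ :=
  (∑ i, ∫ s in Set.Ioc 0 (l i), (‖v i s‖ ^ 2 + ‖dv i s‖ ^ 2 + ‖w i s‖ ^ 2 + ‖dw i s‖ ^ 2))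
  + (∑ j, ‖V j‖ ^ 2) + (∑ j, ‖W j‖ ^ 2)

def matVec (A : Matrix (Fin 3) (Fin 3) ℝ) (x : E3) : E3 := WithLp.toLp 2 (fun j => ∑ l, A j l * x l)

def aform (l : Fin nE → ℝ) (Q : Fin nE → ℝ → Matrix (Fin 3) (Fin 3) ℝ)
    (H : Fin nE → Matrix (Fin 3) (Fin 3) ℝ) (q xi : Fin nE → ℝ → E3) : ℝ :=
  ∑ i, ∫ s in Set.Ioc 0 (l i),
    dot3 (matVec (Q i s * (H i)⁻¹ * (Q i s)ᵀ) (q i s)) (xi i s)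

def PolyDeg (m : ℕ) (g : ℝ → E3) : Prop :=
  ∀ j : Fin 3, ∃ P : Polynomial ℝ, P.natDegree ≤ m ∧ ∀ s, g s j = P.eval s

def SobOn : ℕ → ℝ → (ℝ → E3) → Prop
  | 0, l, g => SqIntOn g l
  | m + 1, l, g => ∃ g', SobOn m l g' ∧ ContinuousOn g (Set.Icc 0 l) ∧
      ∀ x ∈ Set.Icc 0 l, g x = g 0 + ∫ s in Set.Ioc 0 x, g' s

lemma dot3_eq_inner (a b : E3) : dot3 a b = inner ℝ a b := by
  simp [dot3, PiLp.inner_apply, RCLike.inner_apply, mul_comm]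

lemma dot3_self (a : E3) : dot3 a a = ‖a‖ ^ 2 := by
  rw [dot3_eq_inner, real_inner_self_eq_norm_sq]

lemma norm_sq_E3 (a : E3) : ‖a‖ ^ 2 = ∑ j, a j ^ 2 := by
  rw [← dot3_self, dot3]; exact Finset.sum_congr rfl fun j _ => (sq (a j)).symm

lemma cross3_apply0 (a b : E3) : cross3 a b 0 = a 1 * b 2 - a 2 * b 1 := rfl
lemma cross3_apply1 (a b : E3) : cross3 a b 1 = a 2 * b 0 - a 0 * b 2 := rfl
lemma cross3_apply2 (a b : E3) : cross3 a b 2 = a 0 * b 1 - a 1 * b 0 := rfl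

lemma norm_cross3_le (a b : E3) : ‖cross3 a b‖ ≤ ‖a‖ * ‖b‖ := by
  have h1 : ‖cross3 a b‖ ^ 2 ≤ (‖a‖ * ‖b‖) ^ 2 := by
    rw [norm_sq_E3, Fin.sum_univ_three, cross3_apply0, cross3_apply1, cross3_apply2,
      mul_pow, norm_sq_E3, norm_sq_E3, Fin.sum_univ_three, Fin.sum_univ_three]
    nlinarith [sq_nonneg (a 0 * b 0 + a 1 * b 1 + a 2 * b 2)]
  nlinarith [norm_nonneg (cross3 a b), mul_nonneg (norm_nonneg a) (norm_nonneg b)]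

lemma sqIntOn_of_contOn {f : ℝ → E3} {l : ℝ} (h : ContinuousOn f (Set.Icc 0 l)) :
    SqIntOn f l := by
  constructor
  · exact (h.integrableOn_compact isCompact_Icc).mono_set Set.Ioc_subset_Icc_self
  · exact (((h.norm).pow 2).integrableOn_compact isCompact_Icc).mono_set Set.Ioc_subset_Icc_self

lemma SqIntOn.aesm {f : ℝ → E3} {l : ℝ} (h : SqIntOn f l) :
    AEStronglyMeasurable f (volume.restrict (Set.Ioc 0 l)) := h.1.aestronglyMeasurable

lemma integrableOn_dot3 {f g : ℝ → E3} {l : ℝ} (hf : SqIntOn f l) (hg : SqIntOn g l) :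
    IntegrableOn (fun s => ∑ j, f s j * g s j) (Set.Ioc 0 l) := by
  have hm : AEStronglyMeasurable (fun s => inner ℝ (f s) (g s))
      (volume.restrict (Set.Ioc 0 l)) := hf.aesm.inner hg.aesm
  have : IntegrableOn (fun s => inner ℝ (f s) (g s)) (Set.Ioc 0 l) := by
    refine Integrable.mono' (g := fun s => (1/2) * (‖f s‖^2 + ‖g s‖^2)) ?_ hm ?_
    · exact (hf.2.add hg.2).const_mul _
    · filter_upwards with s
      have h1 := abs_real_inner_le_norm (f s) (g s)
      rw [Real.norm_eq_abs]
      nlinarith [sq_nonneg (‖f s‖ - ‖g s‖)]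
  refine this.congr_fun ?_ measurableSet_Ioc
  intro s _; simp [PiLp.inner_apply, RCLike.inner_apply, mul_comm]

lemma SqIntOn.add {f g : ℝ → E3} {l : ℝ} (hf : SqIntOn f l) (hg : SqIntOn g l) :
    SqIntOn (fun s => f s + g s) l := by
  refine ⟨hf.1.add hg.1, ?_⟩
  have : ∀ s, ‖f s + g s‖^2 = ‖f s‖^2 + 2 * inner ℝ (f s) (g s) + ‖g s‖^2 := by
    intro s; rw [norm_add_sq_real]
  simp only [this]
  refine ((hf.2.add ?_).add hg.2)

  have := integrableOn_dot3 hf hg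
  have h2 : IntegrableOn (fun s => inner ℝ (f s) (g s)) (Set.Ioc 0 l) := by
    refine this.congr_fun ?_ measurableSet_Ioc
    intro s _; simp [PiLp.inner_apply, RCLike.inner_apply, mul_comm]
  exact h2.const_mul 2

lemma SqIntOn.smul {f : ℝ → E3} {l : ℝ} (hf : SqIntOn f l) (c : ℝ) :
    SqIntOn (fun s => c • f s) l := by
  refine ⟨hf.1.smul c, ?_⟩
  have : ∀ s, ‖c • f s‖^2 = c^2 * ‖f s‖^2 := by
    intro s; rw [norm_smul]; simp [mul_pow, abs_sq]
  simp only [this]; exact hf.2.const_mul _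

lemma SqIntOn.neg {f : ℝ → E3} {l : ℝ} (hf : SqIntOn f l) : SqIntOn (fun s => -f s) l := by
  have := hf.smul (-1); simpa using this

-- Cauchy-Schwarz for real functions
lemma cs_real {g : ℝ → ℝ} {l : ℝ} (hl : 0 < l) (h1 : IntegrableOn g (Set.Ioc 0 l))
    (h2 : IntegrableOn (fun s => g s ^ 2) (Set.Ioc 0 l)) :
    (∫ s in Set.Ioc 0 l, g s) ^ 2 ≤ l * ∫ s in Set.Ioc 0 l, g s ^ 2 := by
  obtain ⟨I, hI⟩ : ∃ I, I = ∫ s in Set.Ioc 0 l, g s := ⟨_, rfl⟩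
  obtain ⟨m, hm⟩ : ∃ m, m = I / l := ⟨_, rfl⟩
  have hvol : (volume (Set.Ioc (0:ℝ) l)).toReal = l := by
    rw [Real.volume_Ioc, ENNReal.toReal_ofReal (by linarith)]; ring
  have i1 : IntegrableOn (fun s => 2 * m * g s) (Set.Ioc 0 l) := h1.const_mul (2*m)
  have i2 : IntegrableOn (fun _ : ℝ => m ^ 2) (Set.Ioc 0 l) := by
    refine integrableOn_const ?_
    rw [Real.volume_Ioc]; exact ENNReal.ofReal_ne_top
  have h0 : 0 ≤ ∫ s in Set.Ioc 0 l, ((g s - m) ^ 2) := integral_nonneg fun s => sq_nonneg _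
  have hsplit : ∫ s in Set.Ioc 0 l, ((g s - m) ^ 2)
      = (∫ s in Set.Ioc 0 l, g s ^ 2) - 2 * m * I + m ^ 2 * l := by
    have e : ∀ s, (g s - m) ^ 2 = (g s ^ 2 - 2 * m * g s) + m ^ 2 := fun s => by ring
    simp only [e]
    have i3 : IntegrableOn (fun s => g s ^ 2 - 2 * m * g s) (Set.Ioc 0 l) := h2.sub i1
    rw [integral_add i3 i2, integral_sub h2 i1, integral_const_mul, setIntegral_const,
      smul_eq_mul, measureReal_def, hvol, ← hI]
    ring
  rw [hsplit] at h0
  have hml : m * l = I := by rw [hm]; field_simp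
  rw [← hI]
  nlinarith [h0, hml, hl]

lemma cs_int {f : ℝ → E3} {l : ℝ} (hl : 0 < l) (hf : SqIntOn f l) :
    (∫ s in Set.Ioc 0 l, ‖f s‖) ^ 2 ≤ l * ∫ s in Set.Ioc 0 l, ‖f s‖ ^ 2 := by
  exact cs_real hl hf.1.norm hf.2

section Poincare
variable {nE nV : ℕ}

def ERel (tail head : Fin nE → Fin nV) : Fin nV → Fin nV → Prop :=
  fun x y => ∃ i, (tail i = x ∧ head i = y) ∨ (tail i = y ∧ head i = x)

/-- Pointwise variation bound along an edge. -/
lemma var_bound {l : ℝ} {u du : ℝ → E3} (h : H1On l u du) {s : ℝ}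
    (hs : (∫ x in Set.Ioc 0 l, ‖du x‖) ≤ s) :
    ∀ x ∈ Set.Icc 0 l, ‖u x - u 0‖ ≤ s := by
  intro x hx
  rw [h.2.2 x hx]
  simp only [add_sub_cancel_left]
  calc ‖∫ t in Set.Ioc 0 x, du t‖ ≤ ∫ t in Set.Ioc 0 x, ‖du t‖ :=
        norm_integral_le_integral_norm _
    _ ≤ ∫ t in Set.Ioc 0 l, ‖du t‖ := by
        apply setIntegral_mono_set h.2.1.1.norm
        · filter_upwards with t using norm_nonneg _
        · exact (Set.Ioc_subset_Ioc_right hx.2).eventuallyLE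
    _ ≤ s := hs

/-- Adjacent vertices bound. -/
lemma adj_bound (tail head : Fin nE → Fin nV) (l : Fin nE → ℝ)
    {u du : Fin nE → ℝ → E3} {U : Fin nV → E3} {s : ℝ}
    (hl : ∀ i, 0 < l i)
    (hH1 : ∀ i, H1On (l i) (u i) (du i))
    (hdu : ∀ i, (∫ x in Set.Ioc 0 (l i), ‖du i x‖) ≤ s)
    (hjh : ∀ i, ‖u i (l i) - U (head i)‖ ≤ s)
    (hjt : ∀ i, ‖u i 0 - U (tail i)‖ ≤ s)
    {a b : Fin nV} (hab : ERel tail head a b) : ‖U a - U b‖ ≤ 3 * s := by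
  obtain ⟨i, hi⟩ := hab
  have hv := var_bound (hH1 i) (hdu i) (l i) ⟨le_of_lt (hl i), le_refl _⟩
  have key : ‖U (tail i) - U (head i)‖ ≤ 3 * s := by
    have : U (tail i) - U (head i) =
        -(u i 0 - U (tail i)) + (u i 0 - u i (l i)) + (u i (l i) - U (head i)) := by abel
    rw [this]
    calc ‖_ + (u i (l i) - U (head i))‖ ≤ ‖-(u i 0 - U (tail i)) + (u i 0 - u i (l i))‖
          + ‖u i (l i) - U (head i)‖ := norm_add_le _ _
      _ ≤ (‖-(u i 0 - U (tail i))‖ + ‖u i 0 - u i (l i)‖) + ‖u i (l i) - U (head i)‖ := by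
          gcongr; exact norm_add_le _ _
      _ ≤ (s + s) + s := by
          gcongr
          · rw [norm_neg]; exact hjt i
          · rw [norm_sub_rev]; exact hv
          · exact hjh i
      _ = 3 * s := by ring
  rcases hi with ⟨ht, hh⟩ | ⟨ht, hh⟩
  · rw [← ht, ← hh]; exact key
  · rw [← ht, ← hh, norm_sub_rev]; exact key

/-- Chain bound along connectivity paths, with constant independent of the data. -/
lemma chain_bound (tail head : Fin nE → Fin nV) (l : Fin nE → ℝ) (hl : ∀ i, 0 < l i)
    {a b : Fin nV} (h : Relation.ReflTransGen (ERel tail head) a b) :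
    ∃ K : ℝ, 0 ≤ K ∧ ∀ (u du : Fin nE → ℝ → E3) (U : Fin nV → E3) (s : ℝ),
      (∀ i, H1On (l i) (u i) (du i)) →
      (∀ i, (∫ x in Set.Ioc 0 (l i), ‖du i x‖) ≤ s) →
      (∀ i, ‖u i (l i) - U (head i)‖ ≤ s) →
      (∀ i, ‖u i 0 - U (tail i)‖ ≤ s) →
      ‖U a - U b‖ ≤ K * s := by
  induction h with
  | refl => exact ⟨0, le_refl _, fun u du U s _ _ _ _ => by simp⟩
  | @tail b c hab hrel ih =>
    obtain ⟨K, hK0, hK⟩ := ih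
    refine ⟨K + 3, by linarith, fun u du U s hH1 hdu hjh hjt => ?_⟩
    calc ‖U a - U c‖ ≤ ‖U a - U b‖ + ‖U b - U c‖ := by
          have : U a - U c = (U a - U b) + (U b - U c) := by abel
          rw [this]; exact norm_add_le _ _
      _ ≤ K * s + 3 * s := by
          gcongr
          · exact hK u du U s hH1 hdu hjh hjt
          · exact adj_bound tail head l hl hH1 hdu hjh hjt hrel
      _ = (K + 3) * s := by ring

/-- Network Poincaré inequality. -/
lemma poincare (tail head : Fin nE → Fin nV) (l : Fin nE → ℝ) (hl : ∀ i, 0 < l i)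
    (hNE : 0 < nE) (hconn : EdgeConn tail head) :
    ∃ C : ℝ, 0 ≤ C ∧ ∀ (u du : Fin nE → ℝ → E3) (U : Fin nV → E3) (s : ℝ), 0 ≤ s →
      (∀ i, H1On (l i) (u i) (du i)) →
      (∀ i, (∫ x in Set.Ioc 0 (l i), ‖du i x‖) ≤ s) →
      (∀ i, ‖u i (l i) - U (head i)‖ ≤ s) →
      (∀ i, ‖u i 0 - U (tail i)‖ ≤ s) →
      ‖∑ i, ∫ x in Set.Ioc 0 (l i), u i x‖ ≤ s →
      (∀ j, ‖U j‖ ≤ C * s) ∧ (∀ i, ∀ x ∈ Set.Icc 0 (l i), ‖u i x‖ ≤ C * s) := by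
  classical
  have i₀ : Fin nE := ⟨0, hNE⟩
  set j₀ : Fin nV := tail i₀ with hj₀
  -- choose chain constants
  have hch : ∀ j : Fin nV, ∃ K : ℝ, 0 ≤ K ∧ ∀ (u du : Fin nE → ℝ → E3) (U : Fin nV → E3)
      (s : ℝ), (∀ i, H1On (l i) (u i) (du i)) →
      (∀ i, (∫ x in Set.Ioc 0 (l i), ‖du i x‖) ≤ s) →
      (∀ i, ‖u i (l i) - U (head i)‖ ≤ s) →
      (∀ i, ‖u i 0 - U (tail i)‖ ≤ s) → ‖U j - U j₀‖ ≤ K * s :=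
    fun j => chain_bound tail head l hl (hconn j j₀)
  choose K hK0 hK using hch
  set Km : ℝ := ∑ j, K j with hKm
  have hKm0 : 0 ≤ Km := Finset.sum_nonneg fun j _ => hK0 j
  have hKmj : ∀ j, K j ≤ Km := fun j =>
    Finset.single_le_sum (f := K) (fun j _ => hK0 j) (Finset.mem_univ j)
  set L : ℝ := ∑ i, l i with hL
  have hL0 : 0 < L := by
    exact Finset.sum_pos (fun i _ => hl i) ⟨i₀, Finset.mem_univ _⟩
  set C₀ : ℝ := (1 + L * (2 + Km)) / L with hC₀
  have hC₀0 : 0 ≤ C₀ := by positivity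
  refine ⟨2 + C₀ + Km, by positivity, ?_⟩
  intro u du U s hs hH1 hdu hjh hjt hmean
  have hvb : ∀ i, ∀ x ∈ Set.Icc 0 (l i), ‖u i x - u i 0‖ ≤ s :=
    fun i => var_bound (hH1 i) (hdu i)
  have hUj : ∀ j, ‖U j - U j₀‖ ≤ Km * s := fun j => by
    calc ‖U j - U j₀‖ ≤ K j * s := hK j u du U s hH1 hdu hjh hjt
      _ ≤ Km * s := by gcongr; exact hKmj j
  -- bound on ‖u i x - U j₀‖
  have hud : ∀ i, ∀ x ∈ Set.Icc 0 (l i), ‖u i x - U j₀‖ ≤ (2 + Km) * s := by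
    intro i x hx
    have : u i x - U j₀ = (u i x - u i 0) + (u i 0 - U (tail i)) + (U (tail i) - U j₀) := by
      abel
    rw [this]
    calc ‖_ + (U (tail i) - U j₀)‖
        ≤ ‖(u i x - u i 0) + (u i 0 - U (tail i))‖ + ‖U (tail i) - U j₀‖ := norm_add_le _ _
      _ ≤ (‖u i x - u i 0‖ + ‖u i 0 - U (tail i)‖) + ‖U (tail i) - U j₀‖ := by
          gcongr; exact norm_add_le _ _
      _ ≤ (s + s) + Km * s := by gcongr; exacts [hvb i x hx, hjt i, hUj (tail i)]
      _ = (2 + Km) * s := by ring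
  -- mean value argument
  have hmean2 : ∀ i, ‖(∫ x in Set.Ioc 0 (l i), u i x) - (l i) • U j₀‖ ≤ (2 + Km) * s * l i := by
    intro i
    have hiu : IntegrableOn (u i) (Set.Ioc 0 (l i)) :=
      ((hH1 i).1.integrableOn_compact isCompact_Icc).mono_set Set.Ioc_subset_Icc_self
    have hconst : IntegrableOn (fun _ : ℝ => U j₀) (Set.Ioc 0 (l i)) := by
      refine integrableOn_const ?_
      rw [Real.volume_Ioc]; exact ENNReal.ofReal_ne_top
    have heq : (∫ x in Set.Ioc 0 (l i), u i x) - (l i) • U j₀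
        = ∫ x in Set.Ioc 0 (l i), (u i x - U j₀) := by
      rw [integral_sub hiu hconst, setIntegral_const, Real.volume_real_Ioc_of_le (by linarith [hl i])]
      simp
    rw [heq]
    calc ‖∫ x in Set.Ioc 0 (l i), (u i x - U j₀)‖
        ≤ (2 + Km) * s * (volume (Set.Ioc 0 (l i))).toReal := by
          apply norm_setIntegral_le_of_norm_le_const
          · rw [Real.volume_Ioc]; exact ENNReal.ofReal_lt_top
          · intro x hx
            exact hud i x (Set.Ioc_subset_Icc_self hx)
      _ = (2 + Km) * s * l i := by
          rw [Real.volume_Ioc, ENNReal.toReal_ofReal (by linarith [hl i])]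
          simp
  have hUj₀ : ‖U j₀‖ ≤ C₀ * s := by
    have hsum : L • U j₀ = (∑ i, ∫ x in Set.Ioc 0 (l i), u i x)
        - ∑ i, ((∫ x in Set.Ioc 0 (l i), u i x) - (l i) • U j₀) := by
      rw [← Finset.sum_sub_distrib]
      simp [Finset.sum_smul, hL]
    have h1 : L * ‖U j₀‖ ≤ (1 + L * (2 + Km)) * s := by
      have h2 : L * ‖U j₀‖ ≤ s + (2 + Km) * s * L := by
        calc L * ‖U j₀‖ = ‖L • U j₀‖ := by
              rw [norm_smul, Real.norm_eq_abs, abs_of_pos hL0]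
          _ ≤ ‖∑ i, ∫ x in Set.Ioc 0 (l i), u i x‖
              + ‖∑ i, ((∫ x in Set.Ioc 0 (l i), u i x) - (l i) • U j₀)‖ := by
              rw [hsum]; exact norm_sub_le _ _
          _ ≤ s + ∑ i, ((2 + Km) * s * l i) :=
              add_le_add hmean ((norm_sum_le _ _).trans
                (Finset.sum_le_sum fun i _ => hmean2 i))
          _ = s + (2 + Km) * s * L := by rw [← Finset.mul_sum, hL]
      nlinarith [h2]
    rw [hC₀, div_mul_eq_mul_div, le_div_iff₀ hL0]
    calc ‖U j₀‖ * L = L * ‖U j₀‖ := by ring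
      _ ≤ (1 + L * (2 + Km)) * s := h1
      _ = (1 + L * (2 + Km)) * s := rfl
  constructor
  · intro j
    calc ‖U j‖ ≤ ‖U j - U j₀‖ + ‖U j₀‖ := by
          simpa using norm_add_le (U j - U j₀) (U j₀)
      _ ≤ Km * s + C₀ * s := add_le_add (hUj j) hUj₀
      _ ≤ (2 + C₀ + Km) * s := by nlinarith
  · intro i x hx
    calc ‖u i x‖ ≤ ‖u i x - U j₀‖ + ‖U j₀‖ := by
          simpa using norm_add_le (u i x - U j₀) (U j₀)
      _ ≤ (2 + Km) * s + C₀ * s := add_le_add (hud i x hx) hUj₀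
      _ = (2 + C₀ + Km) * s := by ring

end Poincare
section Alg
variable {nE nV : ℕ}

lemma vsum (g : Fin nE → Fin nV) (P : Fin nE → E3) (V : Fin nV → E3) :
    ∑ j, dot3 (∑ i ∈ Finset.univ.filter fun i => g i = j, P i) (V j)
      = ∑ i, dot3 (P i) (V (g i)) := by
  have h1 : ∀ j, dot3 (∑ i ∈ Finset.univ.filter fun i => g i = j, P i) (V j)
      = ∑ i ∈ Finset.univ.filter fun i => g i = j, dot3 (P i) (V (g i)) := by
    intro j
    rw [dot3_eq_inner, sum_inner]
    refine Finset.sum_congr rfl fun i hi => ?_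
    rw [← dot3_eq_inner]
    exact congrArg _ (congrArg V (Finset.mem_filter.1 hi).2.symm)
  simp only [h1]
  exact Finset.sum_fiberwise _ _ _

lemma dot3_smul_neg_self (r : ℝ) (x y : E3) :
    -(dot3 (r • -x) x) - dot3 (r • -y) y = r * (‖-y‖ ^ 2 + ‖-x‖ ^ 2) := by
  simp only [norm_neg, norm_sq_E3, dot3, PiLp.smul_apply, PiLp.neg_apply, smul_eq_mul,
    Fin.sum_univ_three]
  ring

lemma dot3_smul_self (r : ℝ) (x : E3) : dot3 (r • x) x = r * ‖x‖ ^ 2 := by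
  simp only [norm_sq_E3, dot3, PiLp.smul_apply, smul_eq_mul, Fin.sum_univ_three]
  ring

lemma dot3_smul_sub (r : ℝ) (x y : E3) : dot3 (r • x) (y - x) = r * dot3 x y - r * ‖x‖ ^ 2 := by
  simp only [norm_sq_E3, dot3, PiLp.smul_apply, PiLp.sub_apply, smul_eq_mul, Fin.sum_univ_three]
  ring

lemma dot3_quad (r : ℝ) (a b c d : E3) :
    (dot3 (r • (a - b)) a - dot3 (r • (c - d)) d) - (dot3 (r • (a - b)) b - dot3 (r • (c - d)) c)
      = r * ‖a - b‖ ^ 2 + r * ‖c - d‖ ^ 2 := by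
  simp only [norm_sq_E3, dot3, PiLp.smul_apply, PiLp.sub_apply, smul_eq_mul, Fin.sum_univ_three]
  ring

/-- Value of `bform` at the special choice of multipliers. -/
lemma bform_value (tail head : Fin nE → Fin nV) (l : Fin nE → ℝ) (t : Fin nE → ℝ → E3)
    (r : ℝ) (v dv w dw : Fin nE → ℝ → E3) (V : Fin nV → E3) (W : Fin nV → E3) :
    bform tail head l t
      (fun i s => r • -(dw i s))
      (fun i s => r • -(dv i s + cross3 (t i s) (w i s)))
      (fun i => r • (v i (l i) - V (head i)))
      (fun i => r • (V (tail i) - v i 0))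
      (fun i => r • (w i (l i) - W (head i)))
      (fun i => r • (W (tail i) - w i 0))
      (r • ∑ i, ∫ s in Set.Ioc 0 (l i), v i s)
      (r • ∑ i, ∫ s in Set.Ioc 0 (l i), w i s)
      v dv w dw V W
    = r * normVsq l
      (fun i s => -(dw i s))
      (fun i s => -(dv i s + cross3 (t i s) (w i s)))
      (fun i => v i (l i) - V (head i))
      (fun i => V (tail i) - v i 0)
      (fun i => w i (l i) - W (head i))
      (fun i => W (tail i) - w i 0)
      (∑ i, ∫ s in Set.Ioc 0 (l i), v i s)
      (∑ i, ∫ s in Set.Ioc 0 (l i), w i s) := by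
  unfold bform normVsq
  simp only [dot3_smul_neg_self, integral_const_mul]
  have hsub : ∀ (P Q : Fin nE → E3) (Z : Fin nV → E3) (j : Fin nV),
      dot3 ((∑ i ∈ Finset.univ.filter fun i => head i = j, P i)
        - ∑ i ∈ Finset.univ.filter fun i => tail i = j, Q i) (Z j)
      = dot3 (∑ i ∈ Finset.univ.filter fun i => head i = j, P i) (Z j)
        - dot3 (∑ i ∈ Finset.univ.filter fun i => tail i = j, Q i) (Z j) := by
    intro P Q Z j
    rw [dot3_eq_inner, dot3_eq_inner, dot3_eq_inner, inner_sub_left]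
  simp only [hsub, Finset.sum_sub_distrib, vsum tail, vsum head]
  simp only [dot3_smul_self]
  have e1 : ((∑ i, dot3 (r • (v i (l i) - V (head i))) (v i (l i)))
        - ∑ i, dot3 (r • (V (tail i) - v i 0)) (v i 0))
      - ((∑ i, dot3 (r • (v i (l i) - V (head i))) (V (head i)))
        - ∑ i, dot3 (r • (V (tail i) - v i 0)) (V (tail i)))
      = r * (∑ i, ‖v i (l i) - V (head i)‖ ^ 2) + r * ∑ i, ‖V (tail i) - v i 0‖ ^ 2 := by
    rw [← Finset.sum_sub_distrib, ← Finset.sum_sub_distrib, ← Finset.sum_sub_distrib,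
      Finset.mul_sum, Finset.mul_sum, ← Finset.sum_add_distrib]
    exact Finset.sum_congr rfl fun i _ => dot3_quad r _ _ _ _
  have e2 : ((∑ i, dot3 (r • (w i (l i) - W (head i))) (w i (l i)))
        - ∑ i, dot3 (r • (W (tail i) - w i 0)) (w i 0))
      - ((∑ i, dot3 (r • (w i (l i) - W (head i))) (W (head i)))
        - ∑ i, dot3 (r • (W (tail i) - w i 0)) (W (tail i)))
      = r * (∑ i, ‖w i (l i) - W (head i)‖ ^ 2) + r * ∑ i, ‖W (tail i) - w i 0‖ ^ 2 := by
    rw [← Finset.sum_sub_distrib, ← Finset.sum_sub_distrib, ← Finset.sum_sub_distrib,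
      Finset.mul_sum, Finset.mul_sum, ← Finset.sum_add_distrib]
    exact Finset.sum_congr rfl fun i _ => dot3_quad r _ _ _ _
  rw [← Finset.mul_sum]
  linear_combination e1 + e2

lemma normVsq_smul (l : Fin nE → ℝ) (q p : Fin nE → ℝ → E3) (Pp Pm Qp Qm : Fin nE → E3)
    (al be : E3) (r : ℝ) :
    normVsq l (fun i s => r • q i s) (fun i s => r • p i s) (fun i => r • Pp i)
      (fun i => r • Pm i) (fun i => r • Qp i) (fun i => r • Qm i) (r • al) (r • be)
    = r ^ 2 * normVsq l q p Pp Pm Qp Qm al be := by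
  unfold normVsq
  have hp : ∀ x : E3, ‖r • x‖ ^ 2 = r ^ 2 * ‖x‖ ^ 2 := by
    intro x; rw [norm_smul, mul_pow, Real.norm_eq_abs, sq_abs]
  simp only [hp, ← mul_add, integral_const_mul, ← Finset.mul_sum]
end Alg
section Helpers

lemma contOn_apply {f : ℝ → E3} {s : Set ℝ} (h : ContinuousOn f s) (j : Fin 3) :
    ContinuousOn (fun x => f x j) s :=
  (EuclideanSpace.proj (𝕜 := ℝ) j).continuous.comp_continuousOn h

lemma contOn_of_apply {f : ℝ → E3} {s : Set ℝ} (h : ∀ j, ContinuousOn (fun x => f x j) s) :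
    ContinuousOn f s := by
  have h2 : ContinuousOn (fun x => (fun j => f x j : Fin 3 → ℝ)) s :=
    continuousOn_pi.2 h
  exact ((PiLp.continuousLinearEquiv 2 ℝ (fun _ : Fin 3 => ℝ)).symm.continuous).comp_continuousOn h2

lemma contOn_cross {t w : ℝ → E3} {s : Set ℝ} (ht : ContinuousOn t s)
    (hw : ContinuousOn w s) : ContinuousOn (fun x => cross3 (t x) (w x)) s := by
  apply contOn_of_apply
  intro j
  fin_cases j
  · exact (((contOn_apply ht 1).mul (contOn_apply hw 2)).sub
      ((contOn_apply ht 2).mul (contOn_apply hw 1)))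
  · exact (((contOn_apply ht 2).mul (contOn_apply hw 0)).sub
      ((contOn_apply ht 0).mul (contOn_apply hw 2)))
  · exact (((contOn_apply ht 0).mul (contOn_apply hw 1)).sub
      ((contOn_apply ht 1).mul (contOn_apply hw 0)))

lemma int_sq_le_const {f : ℝ → E3} {l M : ℝ} (hl : 0 < l) (hM : 0 ≤ M)
    (hf : IntegrableOn (fun s => ‖f s‖ ^ 2) (Set.Ioc 0 l))
    (hb : ∀ x ∈ Set.Icc 0 l, ‖f x‖ ≤ M) :
    (∫ s in Set.Ioc 0 l, ‖f s‖ ^ 2) ≤ l * M ^ 2 := by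
  have hc : IntegrableOn (fun _ : ℝ => M ^ 2) (Set.Ioc 0 l) := by
    refine integrableOn_const ?_
    rw [Real.volume_Ioc]; exact ENNReal.ofReal_ne_top
  calc (∫ s in Set.Ioc 0 l, ‖f s‖ ^ 2) ≤ ∫ _ in Set.Ioc 0 l, M ^ 2 := by
        apply setIntegral_mono_on hf hc measurableSet_Ioc
        intro x hx
        have := hb x (Set.Ioc_subset_Icc_self hx)
        nlinarith [norm_nonneg (f x)]
    _ = l * M ^ 2 := by
        rw [setIntegral_const, smul_eq_mul, measureReal_def, Real.volume_Ioc,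
          ENNReal.toReal_ofReal (by linarith)]
        ring_nf

lemma int_norm_le_sqrt {f : ℝ → E3} {l S : ℝ} (hl : 0 < l) (hf : SqIntOn f l)
    (hS : (∫ s in Set.Ioc 0 l, ‖f s‖ ^ 2) ≤ S) :
    (∫ s in Set.Ioc 0 l, ‖f s‖) ≤ Real.sqrt l * Real.sqrt S := by
  have h0 : 0 ≤ ∫ s in Set.Ioc 0 l, ‖f s‖ := integral_nonneg fun s => norm_nonneg _
  have hS0 : 0 ≤ S := le_trans (integral_nonneg fun s => sq_nonneg _) hS
  have h1 := cs_int hl hf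
  have h2 : (∫ s in Set.Ioc 0 l, ‖f s‖) ^ 2 ≤ l * S := by
    calc (∫ s in Set.Ioc 0 l, ‖f s‖) ^ 2 ≤ l * ∫ s in Set.Ioc 0 l, ‖f s‖ ^ 2 := h1
      _ ≤ l * S := by nlinarith
  calc (∫ s in Set.Ioc 0 l, ‖f s‖) ≤ Real.sqrt (l * S) := by
        rw [← Real.sqrt_sq h0]; exact Real.sqrt_le_sqrt h2
    _ = Real.sqrt l * Real.sqrt S := Real.sqrt_mul (le_of_lt hl) S

lemma int_norm_le_const {f : ℝ → E3} {l M : ℝ} (hl : 0 < l)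
    (hf : IntegrableOn f (Set.Ioc 0 l))
    (hb : ∀ x ∈ Set.Icc 0 l, ‖f x‖ ≤ M) :
    (∫ s in Set.Ioc 0 l, ‖f s‖) ≤ l * M := by
  have hM : 0 ≤ M := le_trans (norm_nonneg _) (hb 0 ⟨le_refl _, le_of_lt hl⟩)
  have hc : IntegrableOn (fun _ : ℝ => M) (Set.Ioc 0 l) := by
    refine integrableOn_const ?_
    rw [Real.volume_Ioc]; exact ENNReal.ofReal_ne_top
  calc (∫ s in Set.Ioc 0 l, ‖f s‖) ≤ ∫ _ in Set.Ioc 0 l, M := by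
        apply setIntegral_mono_on hf.norm hc measurableSet_Ioc
        intro x hx; exact hb x (Set.Ioc_subset_Icc_self hx)
    _ = l * M := by
        rw [setIntegral_const, smul_eq_mul, measureReal_def, Real.volume_Ioc,
          ENNReal.toReal_ofReal (by linarith)]
        ring

lemma sq_add_le_two_sq (a b : ℝ) : (a + b) ^ 2 ≤ 2 * a ^ 2 + 2 * b ^ 2 := by
  nlinarith [sq_nonneg (a - b)]

lemma le_sqrt_of_sq_le {x S : ℝ} (hx : 0 ≤ x) (h : x ^ 2 ≤ S) : x ≤ Real.sqrt S := by
  rw [← Real.sqrt_sq hx]; exact Real.sqrt_le_sqrt h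

end Helpers




set_option maxHeartbeats 2000000

/-- Continuous inf-sup inequality. -/
theorem stent_continuous_inf_sup
    (tail head : Fin nE → Fin nV) (l : Fin nE → ℝ)
    (hl : ∀ i, 0 < l i) (hNE : 0 < nE) (hconn : EdgeConn tail head)
    (Φ t : Fin nE → ℝ → E3)
    (hΦ : ∀ i, ∀ s ∈ Set.Icc 0 (l i), HasDerivWithinAt (Φ i) (t i s) (Set.Icc 0 (l i)) s)
    (htc : ∀ i, ContinuousOn (t i) (Set.Icc 0 (l i)))
    (htu : ∀ i, ∀ s ∈ Set.Icc 0 (l i), ‖t i s‖ = 1) :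
    ∃ kc > (0:ℝ), ∀ (v dv w dw : Fin nE → ℝ → E3) (V W : Fin nV → E3),
      (∀ i, H1On (l i) (v i) (dv i)) → (∀ i, H1On (l i) (w i) (dw i)) →
      ∃ (q p : Fin nE → ℝ → E3) (Pp Pm Qp Qm : Fin nE → E3) (al be : E3),
        (∀ i, SqIntOn (q i) (l i)) ∧ (∀ i, SqIntOn (p i) (l i)) ∧
        Real.sqrt (normVsq l q p Pp Pm Qp Qm al be) ≤ 1 ∧
        kc * Real.sqrt (normMsq l v dv w dw V W) ≤
          bform tail head l t q p Pp Pm Qp Qm al be v dv w dw V W := by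
  classical
  obtain ⟨Cp, hCp0, hCp⟩ := poincare tail head l hl hNE hconn
  obtain ⟨L, hL⟩ : ∃ L : ℝ, L = ∑ i, l i := ⟨_, rfl⟩
  have hL0 : 0 < L := hL ▸ Finset.sum_pos (fun i _ => hl i) ⟨⟨0, hNE⟩, Finset.mem_univ _⟩
  obtain ⟨Λ, hΛ⟩ : ∃ Λ : ℝ, Λ = 1 + ∑ i, Real.sqrt (l i) := ⟨_, rfl⟩
  have hΛ1 : 1 ≤ Λ := by
    rw [hΛ]
    have : 0 ≤ ∑ i, Real.sqrt (l i) := Finset.sum_nonneg fun i _ => Real.sqrt_nonneg _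
    linarith
  have hΛ0 : 0 ≤ Λ := by linarith
  have hΛi : ∀ i, Real.sqrt (l i) ≤ Λ := by
    intro i
    rw [hΛ]
    have := Finset.single_le_sum (f := fun i => Real.sqrt (l i))
      (fun i _ => Real.sqrt_nonneg _) (Finset.mem_univ i)
    linarith
  obtain ⟨Cw, hCw⟩ : ∃ Cw : ℝ, Cw = Cp * Λ := ⟨_, rfl⟩
  have hCw0 : 0 ≤ Cw := hCw ▸ mul_nonneg hCp0 hΛ0
  obtain ⟨Λ', hΛ'⟩ : ∃ Λ' : ℝ, Λ' = Λ + L * Cw := ⟨_, rfl⟩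
  have hΛ'1 : 1 ≤ Λ' := by
    rw [hΛ']
    nlinarith
  have hΛ'0 : 0 ≤ Λ' := by linarith
  obtain ⟨Cv, hCv⟩ : ∃ Cv : ℝ, Cv = Cp * Λ' := ⟨_, rfl⟩
  have hCv0 : 0 ≤ Cv := hCv ▸ mul_nonneg hCp0 hΛ'0
  obtain ⟨Cfin, hCfin⟩ : ∃ Cfin : ℝ,
      Cfin = (∑ i, (l i * Cv ^ 2 + 2 + 2 * l i * Cw ^ 2 + l i * Cw ^ 2 + 1))
        + nV * Cv ^ 2 + nV * Cw ^ 2 := ⟨_, rfl⟩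
  have hCfin0 : 0 ≤ Cfin := by
    rw [hCfin]
    have h1 : 0 ≤ ∑ i, (l i * Cv ^ 2 + 2 + 2 * l i * Cw ^ 2 + l i * Cw ^ 2 + 1) :=
      Finset.sum_nonneg fun i _ => by nlinarith [hl i, sq_nonneg Cv, sq_nonneg Cw]
    positivity
  refine ⟨(Real.sqrt (Cfin + 1))⁻¹, by positivity, ?_⟩
  intro v dv w dw V W hv hw
  -- notation
  obtain ⟨pt, hpt⟩ : ∃ pt : Fin nE → ℝ → E3,
      pt = fun i s => dv i s + cross3 (t i s) (w i s) := ⟨_, rfl⟩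
  -- integrability
  have hcrossC : ∀ i, ContinuousOn (fun s => cross3 (t i s) (w i s)) (Set.Icc 0 (l i)) :=
    fun i => contOn_cross (htc i) (hw i).1
  have hptSq : ∀ i, SqIntOn (pt i) (l i) := fun i => by
    rw [hpt]; exact (hv i).2.1.add (sqIntOn_of_contOn (hcrossC i))
  have hdwSq : ∀ i, SqIntOn (dw i) (l i) := fun i => (hw i).2.1
  have hdvSq : ∀ i, SqIntOn (dv i) (l i) := fun i => (hv i).2.1
  have hvSq : ∀ i, SqIntOn (v i) (l i) := fun i => sqIntOn_of_contOn (hv i).1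
  have hwSq : ∀ i, SqIntOn (w i) (l i) := fun i => sqIntOn_of_contOn (hw i).1
  -- the unscaled multiplier and its size
  obtain ⟨Sv, hSv⟩ : ∃ Sv : E3, Sv = ∑ i, ∫ s in Set.Ioc 0 (l i), v i s := ⟨_, rfl⟩
  obtain ⟨Sw, hSw⟩ : ∃ Sw : E3, Sw = ∑ i, ∫ s in Set.Ioc 0 (l i), w i s := ⟨_, rfl⟩
  obtain ⟨S, hS⟩ : ∃ S : ℝ, S = normVsq l (fun i s => -(dw i s)) (fun i s => -(pt i s))
      (fun i => v i (l i) - V (head i)) (fun i => V (tail i) - v i 0)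
      (fun i => w i (l i) - W (head i)) (fun i => W (tail i) - w i 0) Sv Sw := ⟨_, rfl⟩
  have hTi : ∀ i, (∫ s in Set.Ioc 0 (l i), (‖-(dw i s)‖ ^ 2 + ‖-(pt i s)‖ ^ 2))
      = (∫ s in Set.Ioc 0 (l i), ‖dw i s‖ ^ 2) + ∫ s in Set.Ioc 0 (l i), ‖pt i s‖ ^ 2 := by
    intro i
    simp only [norm_neg]
    exact integral_add (hdwSq i).2 (hptSq i).2
  have hTnn : ∀ i, 0 ≤ ∫ s in Set.Ioc 0 (l i), (‖-(dw i s)‖ ^ 2 + ‖-(pt i s)‖ ^ 2) :=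
    fun i => integral_nonneg fun s => by positivity
  have hSexp : S = (∑ i, ∫ s in Set.Ioc 0 (l i), (‖-(dw i s)‖ ^ 2 + ‖-(pt i s)‖ ^ 2))
      + (∑ i, ‖v i (l i) - V (head i)‖ ^ 2) + (∑ i, ‖V (tail i) - v i 0‖ ^ 2)
      + (∑ i, ‖w i (l i) - W (head i)‖ ^ 2) + (∑ i, ‖W (tail i) - w i 0‖ ^ 2)
      + ‖Sv‖ ^ 2 + ‖Sw‖ ^ 2 := by rw [hS]; simp only [normVsq]
  have hS0 : 0 ≤ S := by
    rw [hSexp]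
    have h1 : 0 ≤ ∑ i, ∫ s in Set.Ioc 0 (l i), (‖-(dw i s)‖ ^ 2 + ‖-(pt i s)‖ ^ 2) :=
      Finset.sum_nonneg fun i _ => hTnn i
    have h2 : ∀ (f : Fin nE → ℝ), (∀ i, 0 ≤ f i) → 0 ≤ ∑ i, f i :=
      fun f hf => Finset.sum_nonneg fun i _ => hf i
    have g1 := h2 (fun i => ‖v i (l i) - V (head i)‖ ^ 2) fun i => sq_nonneg _
    have g2 := h2 (fun i => ‖V (tail i) - v i 0‖ ^ 2) fun i => sq_nonneg _
    have g3 := h2 (fun i => ‖w i (l i) - W (head i)‖ ^ 2) fun i => sq_nonneg _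
    have g4 := h2 (fun i => ‖W (tail i) - w i 0‖ ^ 2) fun i => sq_nonneg _
    have g5 := sq_nonneg ‖Sv‖
    have g6 := sq_nonneg ‖Sw‖
    linarith
  obtain ⟨σ, hσ⟩ : ∃ σ : ℝ, σ = Real.sqrt S := ⟨_, rfl⟩
  have hσ0 : 0 ≤ σ := hσ ▸ Real.sqrt_nonneg _
  have hσ2 : σ ^ 2 = S := by rw [hσ]; exact Real.sq_sqrt hS0
  -- individual component bounds by S
  have hsum_le : ∀ (f : Fin nE → ℝ), (∀ i, 0 ≤ f i) → (∑ i, f i) ≤ S → ∀ i, f i ≤ S := by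
    intro f hf hfS i
    exact le_trans (Finset.single_le_sum (fun i _ => hf i) (Finset.mem_univ i)) hfS
  have hTS : ∀ i, (∫ s in Set.Ioc 0 (l i), (‖-(dw i s)‖ ^ 2 + ‖-(pt i s)‖ ^ 2)) ≤ S := by
    apply hsum_le _ hTnn
    rw [hSexp]
    have h2 : ∀ (f : Fin nE → ℝ), (∀ i, 0 ≤ f i) → 0 ≤ ∑ i, f i :=
      fun f hf => Finset.sum_nonneg fun i _ => hf i
    have g1 := h2 (fun i => ‖v i (l i) - V (head i)‖ ^ 2) fun i => sq_nonneg _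
    have g2 := h2 (fun i => ‖V (tail i) - v i 0‖ ^ 2) fun i => sq_nonneg _
    have g3 := h2 (fun i => ‖w i (l i) - W (head i)‖ ^ 2) fun i => sq_nonneg _
    have g4 := h2 (fun i => ‖W (tail i) - w i 0‖ ^ 2) fun i => sq_nonneg _
    have g5 := sq_nonneg ‖Sv‖
    have g6 := sq_nonneg ‖Sw‖
    linarith
  have hdwS : ∀ i, (∫ s in Set.Ioc 0 (l i), ‖dw i s‖ ^ 2) ≤ S := by
    intro i
    have := hTS i
    rw [hTi i] at this
    have h2 : 0 ≤ ∫ s in Set.Ioc 0 (l i), ‖pt i s‖ ^ 2 := integral_nonneg fun s => sq_nonneg _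
    linarith
  have hptS : ∀ i, (∫ s in Set.Ioc 0 (l i), ‖pt i s‖ ^ 2) ≤ S := by
    intro i
    have := hTS i
    rw [hTi i] at this
    have h2 : 0 ≤ ∫ s in Set.Ioc 0 (l i), ‖dw i s‖ ^ 2 := integral_nonneg fun s => sq_nonneg _
    linarith
  have hsq_bound : ∀ (f : Fin nE → ℝ), (∑ i, f i ^ 2) ≤ S → ∀ i, f i ^ 2 ≤ S :=
    fun f hfS => hsum_le _ (fun i => sq_nonneg _) hfS
  have hle_σ : ∀ (x : ℝ), 0 ≤ x → x ^ 2 ≤ S → x ≤ σ := fun x hx h =>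
    hσ ▸ le_sqrt_of_sq_le hx h
  have hparts : (∑ i, ‖v i (l i) - V (head i)‖ ^ 2) ≤ S ∧ (∑ i, ‖V (tail i) - v i 0‖ ^ 2) ≤ S
      ∧ (∑ i, ‖w i (l i) - W (head i)‖ ^ 2) ≤ S ∧ (∑ i, ‖W (tail i) - w i 0‖ ^ 2) ≤ S
      ∧ ‖Sv‖ ^ 2 ≤ S ∧ ‖Sw‖ ^ 2 ≤ S := by
    rw [hSexp]
    have h2 : ∀ (f : Fin nE → ℝ), (∀ i, 0 ≤ f i) → 0 ≤ ∑ i, f i :=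
      fun f hf => Finset.sum_nonneg fun i _ => hf i
    have h1 : 0 ≤ ∑ i, ∫ s in Set.Ioc 0 (l i), (‖-(dw i s)‖ ^ 2 + ‖-(pt i s)‖ ^ 2) :=
      Finset.sum_nonneg fun i _ => hTnn i
    have g1 := h2 (fun i => ‖v i (l i) - V (head i)‖ ^ 2) fun i => sq_nonneg _
    have g2 := h2 (fun i => ‖V (tail i) - v i 0‖ ^ 2) fun i => sq_nonneg _
    have g3 := h2 (fun i => ‖w i (l i) - W (head i)‖ ^ 2) fun i => sq_nonneg _
    have g4 := h2 (fun i => ‖W (tail i) - w i 0‖ ^ 2) fun i => sq_nonneg _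
    have g5 := sq_nonneg ‖Sv‖
    have g6 := sq_nonneg ‖Sw‖
    refine ⟨by linarith, by linarith, by linarith, by linarith, by linarith, by linarith⟩
  have hjvh : ∀ i, ‖v i (l i) - V (head i)‖ ≤ σ := fun i =>
    hle_σ _ (norm_nonneg _) (hsq_bound _ hparts.1 i)
  have hjvt : ∀ i, ‖v i 0 - V (tail i)‖ ≤ σ := fun i => by
    rw [norm_sub_rev]; exact hle_σ _ (norm_nonneg _) (hsq_bound _ hparts.2.1 i)
  have hjwh : ∀ i, ‖w i (l i) - W (head i)‖ ≤ σ := fun i =>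
    hle_σ _ (norm_nonneg _) (hsq_bound _ hparts.2.2.1 i)
  have hjwt : ∀ i, ‖w i 0 - W (tail i)‖ ≤ σ := fun i => by
    rw [norm_sub_rev]; exact hle_σ _ (norm_nonneg _) (hsq_bound _ hparts.2.2.2.1 i)
  have hSvb : ‖Sv‖ ≤ σ := hle_σ _ (norm_nonneg _) hparts.2.2.2.2.1
  have hSwb : ‖Sw‖ ≤ σ := hle_σ _ (norm_nonneg _) hparts.2.2.2.2.2
  -- Poincaré for w
  have hσΛ : σ ≤ Λ * σ := le_mul_of_one_le_left hσ0 hΛ1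
  have hσΛ' : σ ≤ Λ' * σ := le_mul_of_one_le_left hσ0 hΛ'1
  have hdw_int : ∀ i, (∫ s in Set.Ioc 0 (l i), ‖dw i s‖) ≤ Λ * σ := by
    intro i
    calc (∫ s in Set.Ioc 0 (l i), ‖dw i s‖) ≤ Real.sqrt (l i) * Real.sqrt S :=
          int_norm_le_sqrt (hl i) (hdwSq i) (hdwS i)
      _ ≤ Λ * σ := by
          rw [hσ]; exact mul_le_mul_of_nonneg_right (hΛi i) (Real.sqrt_nonneg _)
  obtain ⟨hWb, hwb⟩ := hCp w dw W (Λ * σ) (by positivity) hw hdw_int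
    (fun i => le_trans (hjwh i) hσΛ) (fun i => le_trans (hjwt i) hσΛ)
    (le_trans (le_of_eq (congrArg norm hSw.symm)) (le_trans hSwb hσΛ))
  have hwb' : ∀ i, ∀ x ∈ Set.Icc 0 (l i), ‖w i x‖ ≤ Cw * σ := by
    intro i x hx
    calc ‖w i x‖ ≤ Cp * (Λ * σ) := hwb i x hx
      _ = Cw * σ := by rw [hCw]; ring
  have hWb' : ∀ j, ‖W j‖ ≤ Cw * σ := by
    intro j
    calc ‖W j‖ ≤ Cp * (Λ * σ) := hWb j
      _ = Cw * σ := by rw [hCw]; ring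
  -- Poincaré for v
  have hliL : ∀ i, l i ≤ L := by
    intro i
    rw [hL]
    exact Finset.single_le_sum (f := l) (fun i _ => (hl i).le) (Finset.mem_univ i)
  have hcross_bd : ∀ i, ∀ x ∈ Set.Icc 0 (l i), ‖cross3 (t i x) (w i x)‖ ≤ Cw * σ := by
    intro i x hx
    calc ‖cross3 (t i x) (w i x)‖ ≤ ‖t i x‖ * ‖w i x‖ := norm_cross3_le _ _
      _ = ‖w i x‖ := by rw [htu i x hx, one_mul]
      _ ≤ Cw * σ := hwb' i x hx
  have hdv_int : ∀ i, (∫ s in Set.Ioc 0 (l i), ‖dv i s‖) ≤ Λ' * σ := by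
    intro i
    have hcri : SqIntOn (fun s => cross3 (t i s) (w i s)) (l i) :=
      sqIntOn_of_contOn (hcrossC i)
    have hmono : (∫ s in Set.Ioc 0 (l i), ‖dv i s‖)
        ≤ ∫ s in Set.Ioc 0 (l i), (‖pt i s‖ + ‖cross3 (t i s) (w i s)‖) := by
      apply setIntegral_mono_on (hdvSq i).1.norm ((hptSq i).1.norm.add hcri.1.norm)
        measurableSet_Ioc
      intro x _
      have hd : dv i x = pt i x - cross3 (t i x) (w i x) := by rw [hpt]; simp
      rw [hd]
      exact norm_sub_le _ _
    have hsplit : (∫ s in Set.Ioc 0 (l i), (‖pt i s‖ + ‖cross3 (t i s) (w i s)‖))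
        = (∫ s in Set.Ioc 0 (l i), ‖pt i s‖)
          + ∫ s in Set.Ioc 0 (l i), ‖cross3 (t i s) (w i s)‖ :=
      integral_add (hptSq i).1.norm hcri.1.norm
    have h1 : (∫ s in Set.Ioc 0 (l i), ‖pt i s‖) ≤ Real.sqrt (l i) * Real.sqrt S :=
      int_norm_le_sqrt (hl i) (hptSq i) (hptS i)
    have h2 : (∫ s in Set.Ioc 0 (l i), ‖cross3 (t i s) (w i s)‖) ≤ l i * (Cw * σ) :=
      int_norm_le_const (hl i) hcri.1 (hcross_bd i)
    have h3 : Real.sqrt (l i) * Real.sqrt S ≤ Λ * σ := by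
      rw [hσ]; exact mul_le_mul_of_nonneg_right (hΛi i) (Real.sqrt_nonneg _)
    have h4 : l i * (Cw * σ) ≤ L * (Cw * σ) :=
      mul_le_mul_of_nonneg_right (hliL i) (by positivity)
    rw [hΛ']
    calc (∫ s in Set.Ioc 0 (l i), ‖dv i s‖)
        ≤ (∫ s in Set.Ioc 0 (l i), ‖pt i s‖)
          + ∫ s in Set.Ioc 0 (l i), ‖cross3 (t i s) (w i s)‖ := by rw [← hsplit]; exact hmono
      _ ≤ Λ * σ + L * (Cw * σ) := by linarith
      _ = (Λ + L * Cw) * σ := by ring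
  obtain ⟨hVb, hvb⟩ := hCp v dv V (Λ' * σ) (by positivity) hv hdv_int
    (fun i => le_trans (hjvh i) hσΛ') (fun i => le_trans (hjvt i) hσΛ')
    (le_trans (le_of_eq (congrArg norm hSv.symm)) (le_trans hSvb hσΛ'))
  have hvb' : ∀ i, ∀ x ∈ Set.Icc 0 (l i), ‖v i x‖ ≤ Cv * σ := by
    intro i x hx
    calc ‖v i x‖ ≤ Cp * (Λ' * σ) := hvb i x hx
      _ = Cv * σ := by rw [hCv]; ring
  have hVb' : ∀ j, ‖V j‖ ≤ Cv * σ := by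
    intro j
    calc ‖V j‖ ≤ Cp * (Λ' * σ) := hVb j
      _ = Cv * σ := by rw [hCv]; ring
  -- bound on normMsq
  have hCvσ : (Cv * σ) ^ 2 = Cv ^ 2 * S := by rw [mul_pow, hσ2]
  have hCwσ : (Cw * σ) ^ 2 = Cw ^ 2 * S := by rw [mul_pow, hσ2]
  have hedge : ∀ i, (∫ s in Set.Ioc 0 (l i),
        (‖v i s‖ ^ 2 + ‖dv i s‖ ^ 2 + ‖w i s‖ ^ 2 + ‖dw i s‖ ^ 2))
      ≤ (l i * Cv ^ 2 + 2 + 2 * l i * Cw ^ 2 + l i * Cw ^ 2 + 1) * S := by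
    intro i
    have i1 : IntegrableOn (fun s => ‖v i s‖ ^ 2 + ‖dv i s‖ ^ 2) (Set.Ioc 0 (l i)) :=
      (hvSq i).2.add (hdvSq i).2
    have i2 : IntegrableOn (fun s => ‖v i s‖ ^ 2 + ‖dv i s‖ ^ 2 + ‖w i s‖ ^ 2)
        (Set.Ioc 0 (l i)) := i1.add (hwSq i).2
    have hsplit : (∫ s in Set.Ioc 0 (l i),
          (‖v i s‖ ^ 2 + ‖dv i s‖ ^ 2 + ‖w i s‖ ^ 2 + ‖dw i s‖ ^ 2))
        = (∫ s in Set.Ioc 0 (l i), ‖v i s‖ ^ 2) + (∫ s in Set.Ioc 0 (l i), ‖dv i s‖ ^ 2)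
          + (∫ s in Set.Ioc 0 (l i), ‖w i s‖ ^ 2) + ∫ s in Set.Ioc 0 (l i), ‖dw i s‖ ^ 2 := by
      rw [integral_add i2 (hdwSq i).2, integral_add i1 (hwSq i).2,
        integral_add (hvSq i).2 (hdvSq i).2]
    have e1 : (∫ s in Set.Ioc 0 (l i), ‖v i s‖ ^ 2) ≤ l i * (Cv * σ) ^ 2 :=
      int_sq_le_const (hl i) (by positivity) (hvSq i).2 (hvb' i)
    have e3 : (∫ s in Set.Ioc 0 (l i), ‖w i s‖ ^ 2) ≤ l i * (Cw * σ) ^ 2 :=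
      int_sq_le_const (hl i) (by positivity) (hwSq i).2 (hwb' i)
    have e2 : (∫ s in Set.Ioc 0 (l i), ‖dv i s‖ ^ 2)
        ≤ 2 * (∫ s in Set.Ioc 0 (l i), ‖pt i s‖ ^ 2)
          + 2 * ∫ s in Set.Ioc 0 (l i), ‖w i s‖ ^ 2 := by
      have imono : (∫ s in Set.Ioc 0 (l i), ‖dv i s‖ ^ 2)
          ≤ ∫ s in Set.Ioc 0 (l i), (2 * ‖pt i s‖ ^ 2 + 2 * ‖w i s‖ ^ 2) := by
        apply setIntegral_mono_on (hdvSq i).2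
          (((hptSq i).2.const_mul 2).add ((hwSq i).2.const_mul 2)) measurableSet_Ioc
        intro x hx
        have hd : dv i x = pt i x - cross3 (t i x) (w i x) := by rw [hpt]; simp
        have hc : ‖cross3 (t i x) (w i x)‖ ≤ ‖w i x‖ := by
          calc ‖cross3 (t i x) (w i x)‖ ≤ ‖t i x‖ * ‖w i x‖ := norm_cross3_le _ _
            _ = ‖w i x‖ := by rw [htu i x (Set.Ioc_subset_Icc_self hx), one_mul]
        have hdn : ‖dv i x‖ ≤ ‖pt i x‖ + ‖w i x‖ := by
          rw [hd]
          exact le_trans (norm_sub_le _ _) (by linarith)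
        exact le_trans (pow_le_pow_left₀ (norm_nonneg _) hdn 2)
          (sq_add_le_two_sq ‖pt i x‖ ‖w i x‖)
      have isplit : (∫ s in Set.Ioc 0 (l i), (2 * ‖pt i s‖ ^ 2 + 2 * ‖w i s‖ ^ 2))
          = 2 * (∫ s in Set.Ioc 0 (l i), ‖pt i s‖ ^ 2)
            + 2 * ∫ s in Set.Ioc 0 (l i), ‖w i s‖ ^ 2 := by
        rw [integral_add ((hptSq i).2.const_mul 2) ((hwSq i).2.const_mul 2),
          integral_const_mul, integral_const_mul]
      rw [← isplit]
      exact imono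
    have e4 := hdwS i
    have e5 := hptS i
    rw [hsplit]
    rw [hCvσ] at e1
    rw [hCwσ] at e3
    have e2' : (∫ s in Set.Ioc 0 (l i), ‖dv i s‖ ^ 2)
        ≤ 2 * S + 2 * (l i * (Cw ^ 2 * S)) :=
      le_trans e2 (add_le_add (mul_le_mul_of_nonneg_left e5 (by norm_num))
        (mul_le_mul_of_nonneg_left e3 (by norm_num)))
    refine le_trans (add_le_add (add_le_add (add_le_add e1 e2') e3) e4) (le_of_eq ?_)
    ring
  have hMexp : normMsq l v dv w dw V W
      = (∑ i, ∫ s in Set.Ioc 0 (l i),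
          (‖v i s‖ ^ 2 + ‖dv i s‖ ^ 2 + ‖w i s‖ ^ 2 + ‖dw i s‖ ^ 2))
        + (∑ j, ‖V j‖ ^ 2) + (∑ j, ‖W j‖ ^ 2) := rfl
  have hMnn : 0 ≤ normMsq l v dv w dw V W := by
    rw [hMexp]
    have h1 : 0 ≤ ∑ i, ∫ s in Set.Ioc 0 (l i),
        (‖v i s‖ ^ 2 + ‖dv i s‖ ^ 2 + ‖w i s‖ ^ 2 + ‖dw i s‖ ^ 2) :=
      Finset.sum_nonneg fun i _ => integral_nonneg fun s => by positivity
    have h2 : (0:ℝ) ≤ ∑ j, ‖V j‖ ^ 2 := Finset.sum_nonneg fun j _ => sq_nonneg _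
    have h3 : (0:ℝ) ≤ ∑ j, ‖W j‖ ^ 2 := Finset.sum_nonneg fun j _ => sq_nonneg _
    linarith
  have hMS : normMsq l v dv w dw V W ≤ Cfin * S := by
    rw [hMexp, hCfin]
    have h1 : (∑ i, ∫ s in Set.Ioc 0 (l i),
          (‖v i s‖ ^ 2 + ‖dv i s‖ ^ 2 + ‖w i s‖ ^ 2 + ‖dw i s‖ ^ 2))
        ≤ (∑ i, (l i * Cv ^ 2 + 2 + 2 * l i * Cw ^ 2 + l i * Cw ^ 2 + 1)) * S := by
      rw [Finset.sum_mul]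
      exact Finset.sum_le_sum fun i _ => hedge i
    have h2 : (∑ j, ‖V j‖ ^ 2) ≤ (nV : ℝ) * Cv ^ 2 * S := by
      calc (∑ j, ‖V j‖ ^ 2) ≤ ∑ _j : Fin nV, Cv ^ 2 * S := by
            apply Finset.sum_le_sum
            intro j _
            calc ‖V j‖ ^ 2 ≤ (Cv * σ) ^ 2 :=
                  pow_le_pow_left₀ (norm_nonneg _) (hVb' j) 2
              _ = Cv ^ 2 * S := hCvσ
        _ = (nV : ℝ) * Cv ^ 2 * S := by
            rw [Finset.sum_const, Finset.card_univ, Fintype.card_fin, nsmul_eq_mul]; ring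
    have h3 : (∑ j, ‖W j‖ ^ 2) ≤ (nV : ℝ) * Cw ^ 2 * S := by
      calc (∑ j, ‖W j‖ ^ 2) ≤ ∑ _j : Fin nV, Cw ^ 2 * S := by
            apply Finset.sum_le_sum
            intro j _
            calc ‖W j‖ ^ 2 ≤ (Cw * σ) ^ 2 :=
                  pow_le_pow_left₀ (norm_nonneg _) (hWb' j) 2
              _ = Cw ^ 2 * S := hCwσ
        _ = (nV : ℝ) * Cw ^ 2 * S := by
            rw [Finset.sum_const, Finset.card_univ, Fintype.card_fin, nsmul_eq_mul]; ring
    refine le_trans (add_le_add (add_le_add h1 h2) h3) (le_of_eq ?_)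
    ring
  -- the multiplier
  obtain ⟨r, hr⟩ : ∃ r : ℝ, r = (Real.sqrt S)⁻¹ := ⟨_, rfl⟩
  have hr0 : 0 ≤ r := hr ▸ inv_nonneg.2 (Real.sqrt_nonneg _)
  refine ⟨fun i s => r • -(dw i s), fun i s => r • -(pt i s),
    fun i => r • (v i (l i) - V (head i)), fun i => r • (V (tail i) - v i 0),
    fun i => r • (w i (l i) - W (head i)), fun i => r • (W (tail i) - w i 0),
    r • Sv, r • Sw, fun i => ((hdwSq i).neg).smul r, fun i => ((hptSq i).neg).smul r,
    ?_, ?_⟩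
  · -- norm of the multiplier is at most one
    have hnv : normVsq l (fun i s => r • -(dw i s)) (fun i s => r • -(pt i s))
        (fun i => r • (v i (l i) - V (head i))) (fun i => r • (V (tail i) - v i 0))
        (fun i => r • (w i (l i) - W (head i))) (fun i => r • (W (tail i) - w i 0))
        (r • Sv) (r • Sw) = r ^ 2 * S := by
      rw [normVsq_smul l (fun i s => -(dw i s)) (fun i s => -(pt i s))
        (fun i => v i (l i) - V (head i)) (fun i => V (tail i) - v i 0)
        (fun i => w i (l i) - W (head i)) (fun i => W (tail i) - w i 0) Sv Sw r, ← hS]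
    rw [hnv]
    rcases eq_or_lt_of_le hS0 with hS00 | hSpos
    · rw [← hS00, mul_zero, Real.sqrt_zero]
      norm_num
    · have : r ^ 2 * S = 1 := by
        rw [hr, inv_pow, Real.sq_sqrt hS0]
        field_simp
      rw [this, Real.sqrt_one]
  · -- the inf-sup estimate
    have hbv : bform tail head l t (fun i s => r • -(dw i s)) (fun i s => r • -(pt i s))
        (fun i => r • (v i (l i) - V (head i))) (fun i => r • (V (tail i) - v i 0))
        (fun i => r • (w i (l i) - W (head i))) (fun i => r • (W (tail i) - w i 0))
        (r • Sv) (r • Sw) v dv w dw V W = r * S := by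
      have hS2 := hS
      simp only [hpt] at hS2 ⊢
      simp only [hSv, hSw] at hS2 ⊢
      rw [bform_value tail head l t r v dv w dw V W, ← hS2]
    rw [hbv]
    rcases eq_or_lt_of_le hS0 with hS00 | hSpos
    · have hM0 : normMsq l v dv w dw V W = 0 := by
        have := hMS
        rw [← hS00] at this
        simp at this
        linarith
      rw [hM0, Real.sqrt_zero, mul_zero, ← hS00, mul_zero]
    · have hrS : r * S = Real.sqrt S := by
        rw [hr, inv_mul_eq_div, Real.div_sqrt]
      rw [hrS]
      have hb1 : Real.sqrt (normMsq l v dv w dw V W)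
          ≤ Real.sqrt (Cfin + 1) * Real.sqrt S := by
        rw [← Real.sqrt_mul (by positivity) S]
        apply Real.sqrt_le_sqrt
        have he : (Cfin + 1) * S = Cfin * S + S := by ring
        rw [he]
        exact le_trans hMS (le_add_of_nonneg_right hSpos.le)
      have hc0 : 0 < Real.sqrt (Cfin + 1) := Real.sqrt_pos.2 (by linarith)
      calc (Real.sqrt (Cfin + 1))⁻¹ * Real.sqrt (normMsq l v dv w dw V W)
          ≤ (Real.sqrt (Cfin + 1))⁻¹ * (Real.sqrt (Cfin + 1) * Real.sqrt S) := by
            apply mul_le_mul_of_nonneg_left hb1 (by positivity)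
        _ = Real.sqrt S := by field_simp

end
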